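/- For every fixed Δt with 0 ≤ Δt ≤ 1/8, the function z ↦ arcsin(z + Δt·(2 + 2z)) + 3·arcsin(z) − 8·arcsin( (sin(½·arcsin z) − 2Δt)/(1 + 2Δt) ) is nondecreasing on the interval 0 ≤ z ≤ 1/2; that is, for 0 ≤ z₁ ≤ z₂ ≤ 1/2 the value at z₁ is at most the value at z₂. -/

import Mathlib

open Real Set

private lemma aux_G (Δt : ℝ) (hΔt₀ : 0 ≤ Δt) (hΔt₁ : Δt ≤ 1/8) :
    MonotoneOn (fun z : ℝ => Real.arcsin ((1 + 2*Δt) * z + 2*Δt) - Real.arcsin z)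
      (Set.Icc (0:ℝ) (1/2)) := by
  apply monotoneOn_of_deriv_nonneg (convex_Icc _ _)
  · exact ((Real.continuous_arcsin.comp (by continuity)).sub
      Real.continuous_arcsin).continuousOn
  · intro x hx
    rw [interior_Icc] at hx
    obtain ⟨hx0, hx1⟩ := hx
    set u : ℝ := (1 + 2*Δt) * x + 2*Δt with hu
    have hu1 : u ≠ -1 := by rw [hu]; nlinarith
    have hu2 : u ≠ 1 := by rw [hu]; nlinarith
    have hinner : HasDerivAt (fun z : ℝ => (1 + 2*Δt) * z + 2*Δt) (1 + 2*Δt) x := by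
      simpa using ((hasDerivAt_id x).const_mul (1 + 2*Δt)).add_const (2*Δt)
    have h1 : HasDerivAt (fun z : ℝ => Real.arcsin ((1 + 2*Δt) * z + 2*Δt))
        (1 / Real.sqrt (1 - u ^ 2) * (1 + 2*Δt)) x :=
      (Real.hasDerivAt_arcsin hu1 hu2).comp (h := fun z : ℝ => (1 + 2*Δt) * z + 2*Δt) x hinner
    have h2 : HasDerivAt Real.arcsin (1 / Real.sqrt (1 - x ^ 2)) x :=
      Real.hasDerivAt_arcsin (by nlinarith) (by nlinarith)
    exact ((h1.sub h2).differentiableAt).differentiableWithinAt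
  · intro x hx
    rw [interior_Icc] at hx
    obtain ⟨hx0, hx1⟩ := hx
    set u : ℝ := (1 + 2*Δt) * x + 2*Δt with hu
    have hu1 : u ≠ -1 := by rw [hu]; nlinarith
    have hu2 : u ≠ 1 := by rw [hu]; nlinarith
    have hinner : HasDerivAt (fun z : ℝ => (1 + 2*Δt) * z + 2*Δt) (1 + 2*Δt) x := by
      simpa using ((hasDerivAt_id x).const_mul (1 + 2*Δt)).add_const (2*Δt)
    have h1 : HasDerivAt (fun z : ℝ => Real.arcsin ((1 + 2*Δt) * z + 2*Δt))
        (1 / Real.sqrt (1 - u ^ 2) * (1 + 2*Δt)) x :=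
      (Real.hasDerivAt_arcsin hu1 hu2).comp (h := fun z : ℝ => (1 + 2*Δt) * z + 2*Δt) x hinner
    have h2 : HasDerivAt Real.arcsin (1 / Real.sqrt (1 - x ^ 2)) x :=
      Real.hasDerivAt_arcsin (by nlinarith) (by nlinarith)
    rw [show deriv (fun z : ℝ => Real.arcsin ((1 + 2*Δt) * z + 2*Δt) - Real.arcsin z) x = _ from (h1.sub h2).deriv]
    -- show the derivative is nonnegative
    have hux : x ≤ u := by rw [hu]; nlinarith
    have hub : u ≤ 7/8 := by rw [hu]; nlinarith
    have hulb : 0 ≤ u := by rw [hu]; nlinarith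
    have h1u : 0 < 1 - u ^ 2 := by nlinarith
    have h1x : 0 < 1 - x ^ 2 := by nlinarith
    have sB : 0 < Real.sqrt (1 - u ^ 2) := Real.sqrt_pos.2 h1u
    have sA : 0 < Real.sqrt (1 - x ^ 2) := Real.sqrt_pos.2 h1x
    have hsq : Real.sqrt (1 - u ^ 2) ≤ Real.sqrt (1 - x ^ 2) :=
      Real.sqrt_le_sqrt (by nlinarith)
    have h3 : 1 / Real.sqrt (1 - x ^ 2) ≤ 1 / Real.sqrt (1 - u ^ 2) :=
      one_div_le_one_div_of_le sB hsq
    have h4 : 1 / Real.sqrt (1 - u ^ 2) ≤ 1 / Real.sqrt (1 - u ^ 2) * (1 + 2*Δt) := by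
      nlinarith [one_div_pos.2 sB]
    linarith

private lemma aux_H_deriv (Δt : ℝ) (hΔt₀ : 0 ≤ Δt) (hΔt₁ : Δt ≤ 1/8)
    (s : ℝ) (hs0 : 0 < s) (hs1 : s < 1/2) :
    HasDerivAt (fun t : ℝ => Real.arcsin t - Real.arcsin ((t - 2*Δt) / (1 + 2*Δt)))
      (1 / Real.sqrt (1 - s ^ 2) -
        1 / Real.sqrt (1 - ((s - 2*Δt) / (1 + 2*Δt)) ^ 2) * (1 / (1 + 2*Δt))) s := by
  have hc : (0:ℝ) < 1 + 2*Δt := by linarith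
  have hw1 : (s - 2*Δt) / (1 + 2*Δt) ≠ -1 := by
    intro h
    have := (div_eq_iff hc.ne').1 h
    nlinarith
  have hw2 : (s - 2*Δt) / (1 + 2*Δt) ≠ 1 := by
    intro h
    have := (div_eq_iff hc.ne').1 h
    nlinarith
  have hinner : HasDerivAt (fun t : ℝ => (t - 2*Δt) / (1 + 2*Δt)) (1 / (1 + 2*Δt)) s := by
    simpa using ((hasDerivAt_id s).sub_const (2*Δt)).div_const (1 + 2*Δt)
  have h1 : HasDerivAt (fun t : ℝ => Real.arcsin ((t - 2*Δt) / (1 + 2*Δt)))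
      (1 / Real.sqrt (1 - ((s - 2*Δt) / (1 + 2*Δt)) ^ 2) * (1 / (1 + 2*Δt))) s :=
    (Real.hasDerivAt_arcsin hw1 hw2).comp (h := fun t : ℝ => (t - 2*Δt) / (1 + 2*Δt)) s hinner
  have h2 : HasDerivAt Real.arcsin (1 / Real.sqrt (1 - s ^ 2)) s :=
    Real.hasDerivAt_arcsin (by nlinarith) (by nlinarith)
  exact h2.sub h1

private lemma aux_H (Δt : ℝ) (hΔt₀ : 0 ≤ Δt) (hΔt₁ : Δt ≤ 1/8) :
    MonotoneOn (fun s : ℝ => Real.arcsin s - Real.arcsin ((s - 2*Δt) / (1 + 2*Δt)))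
      (Set.Icc (0:ℝ) (1/2)) := by
  have hc : (0:ℝ) < 1 + 2*Δt := by linarith
  apply monotoneOn_of_deriv_nonneg (convex_Icc _ _)
  · exact (Real.continuous_arcsin.sub
      (Real.continuous_arcsin.comp (by continuity))).continuousOn
  · intro s hs
    rw [interior_Icc] at hs
    exact ((aux_H_deriv Δt hΔt₀ hΔt₁ s hs.1 hs.2).differentiableAt).differentiableWithinAt
  · intro s hs
    rw [interior_Icc] at hs
    obtain ⟨hs0, hs1⟩ := hs
    rw [(aux_H_deriv Δt hΔt₀ hΔt₁ s hs0 hs1).deriv]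
    set w : ℝ := (s - 2*Δt) / (1 + 2*Δt) with hwdef
    have h1s : 0 < 1 - s ^ 2 := by nlinarith
    have hwsq : w ^ 2 < 1 := by
      rw [hwdef, div_pow, div_lt_one (by positivity)]
      nlinarith
    have h1w : 0 < 1 - w ^ 2 := by nlinarith
    have sA : 0 < Real.sqrt (1 - s ^ 2) := Real.sqrt_pos.2 h1s
    have sB : 0 < Real.sqrt (1 - w ^ 2) := Real.sqrt_pos.2 h1w
    have key : 1 - s ^ 2 ≤ (1 - w ^ 2) * (1 + 2*Δt) ^ 2 := by
      have hw2eq : (1 - w ^ 2) * (1 + 2*Δt) ^ 2 = (1 + 2*Δt) ^ 2 - (s - 2*Δt) ^ 2 := by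
        rw [hwdef]; field_simp
      rw [hw2eq]
      nlinarith [mul_nonneg hΔt₀ hs0.le]
    have hsqle : Real.sqrt (1 - s ^ 2) ≤ Real.sqrt (1 - w ^ 2) * (1 + 2*Δt) := by
      have heq : Real.sqrt ((1 - w ^ 2) * (1 + 2*Δt) ^ 2)
          = Real.sqrt (1 - w ^ 2) * (1 + 2*Δt) := by
        rw [Real.sqrt_mul h1w.le, Real.sqrt_sq hc.le]
      rw [← heq]
      exact Real.sqrt_le_sqrt key
    have h3 : 1 / Real.sqrt (1 - w ^ 2) * (1 / (1 + 2*Δt))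
        ≤ 1 / Real.sqrt (1 - s ^ 2) := by
      rw [div_mul_div_comm, one_mul]
      exact one_div_le_one_div_of_le sA hsqle
    linarith

theorem stmt_15 (Δt : ℝ) (hΔt₀ : 0 ≤ Δt) (hΔt₁ : Δt ≤ 1/8)
    (z₁ z₂ : ℝ) (hz₁ : 0 ≤ z₁) (h12 : z₁ ≤ z₂) (hz₂ : z₂ ≤ 1/2) :
    Real.arcsin (z₁ + Δt * (2 + 2 * z₁)) + 3 * Real.arcsin z₁ -
        8 * Real.arcsin ((Real.sin (1/2 * Real.arcsin z₁) - 2 * Δt) / (1 + 2 * Δt))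
      ≤ Real.arcsin (z₂ + Δt * (2 + 2 * z₂)) + 3 * Real.arcsin z₂ -
        8 * Real.arcsin ((Real.sin (1/2 * Real.arcsin z₂) - 2 * Δt) / (1 + 2 * Δt)) := by
  have hz₁' : z₁ ≤ 1/2 := h12.trans hz₂
  have hz₂' : 0 ≤ z₂ := hz₁.trans h12
  have hπ := Real.pi_pos
  -- facts about θᵢ = arcsin zᵢ and sᵢ = sin (θᵢ/2)
  have key : ∀ z : ℝ, 0 ≤ z → z ≤ 1/2 →
      Real.arcsin (Real.sin (1/2 * Real.arcsin z)) = 1/2 * Real.arcsin z ∧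
      0 ≤ Real.sin (1/2 * Real.arcsin z) ∧ Real.sin (1/2 * Real.arcsin z) ≤ 1/2 := by
    intro z h0 h1
    have hθ0 : 0 ≤ Real.arcsin z := Real.arcsin_nonneg.2 h0
    have hθ1 : Real.arcsin z ≤ π/2 := Real.arcsin_le_pi_div_two z
    have hmem : 1/2 * Real.arcsin z ∈ Set.Icc (-(π/2)) (π/2) :=
      ⟨by linarith, by linarith⟩
    have hmem' : Real.arcsin z ∈ Set.Icc (-(π/2)) (π/2) :=
      ⟨by linarith, hθ1⟩
    refine ⟨Real.arcsin_sin hmem.1 hmem.2, ?_, ?_⟩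
    · exact Real.sin_nonneg_of_nonneg_of_le_pi (by linarith) (by linarith)
    · have hle : Real.sin (1/2 * Real.arcsin z) ≤ Real.sin (Real.arcsin z) :=
        Real.strictMonoOn_sin.monotoneOn hmem hmem' (by linarith)
      rw [Real.sin_arcsin (by linarith) (by linarith)] at hle
      linarith
  obtain ⟨harc₁, hs₁0, hs₁1⟩ := key z₁ hz₁ hz₁'
  obtain ⟨harc₂, hs₂0, hs₂1⟩ := key z₂ hz₂' hz₂
  -- s₁ ≤ s₂
  have hθle : Real.arcsin z₁ ≤ Real.arcsin z₂ := Real.monotone_arcsin h12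
  have hθ0₁ : 0 ≤ Real.arcsin z₁ := Real.arcsin_nonneg.2 hz₁
  have hθ1₂ : Real.arcsin z₂ ≤ π/2 := Real.arcsin_le_pi_div_two z₂
  have hθ1₁ : Real.arcsin z₁ ≤ π/2 := Real.arcsin_le_pi_div_two z₁
  have hθ0₂ : 0 ≤ Real.arcsin z₂ := Real.arcsin_nonneg.2 hz₂'
  have hs12 : Real.sin (1/2 * Real.arcsin z₁) ≤ Real.sin (1/2 * Real.arcsin z₂) :=
    Real.strictMonoOn_sin.monotoneOn ⟨by linarith, by linarith⟩
      ⟨by linarith, by linarith⟩ (by linarith)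
  -- apply the two monotonicity lemmas
  have hG := aux_G Δt hΔt₀ hΔt₁ (Set.mem_Icc.2 ⟨hz₁, hz₁'⟩) (Set.mem_Icc.2 ⟨hz₂', hz₂⟩) h12
  have hH := aux_H Δt hΔt₀ hΔt₁ (Set.mem_Icc.2 ⟨hs₁0, hs₁1⟩) (Set.mem_Icc.2 ⟨hs₂0, hs₂1⟩) hs12
  simp only at hG hH
  have e₁ : z₁ + Δt * (2 + 2 * z₁) = (1 + 2*Δt) * z₁ + 2*Δt := by ring
  have e₂ : z₂ + Δt * (2 + 2 * z₂) = (1 + 2*Δt) * z₂ + 2*Δt := by ring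
  have e₃ : (2:ℝ) * Δt = 2*Δt := by ring
  rw [e₁, e₂]
  have ew₁ : (Real.sin (1/2 * Real.arcsin z₁) - 2 * Δt) / (1 + 2 * Δt)
      = (Real.sin (1/2 * Real.arcsin z₁) - 2*Δt) / (1 + 2*Δt) := by norm_num
  have ew₂ : (Real.sin (1/2 * Real.arcsin z₂) - 2 * Δt) / (1 + 2 * Δt)
      = (Real.sin (1/2 * Real.arcsin z₂) - 2*Δt) / (1 + 2*Δt) := by norm_num
  rw [ew₁, ew₂]
  linarith [hG, hH, harc₁, harc₂]
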